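/- arXiv:2107.04992 — 2 statements merged into one kernel-verified Lean document; each statement's English description precedes it below -/
import Mathlib

section
/- Let m, k be integers with m ≥ 5 and 2 ≤ k ≤ ⌊(m-1)/2⌋, and let ḡ_{(m,k)} be the associated function on 𝔽_3^m. Then every codeword of the code C_{ḡ_{(m,k)}} has Hamming weight at most 3^m - Σ_{j=0}^{k} 2^j·C(m, j), and this weight is attained by the codeword c_{1,0} (u = 1, v = 0); that is, the maximum Hamming weight of C_{ḡ_{(m,k)}} equals 3^m - Σ_{j=0}^{k} 2^j·C(m, j). -/
open Finset

/-- The function `ḡ_{(m,k)} : 𝔽_3^m → 𝔽_3`: `1` if `wt(x) > k`, `0` if `wt(x) ≤ k`. -/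
def gbar {m : ℕ} (k : ℕ) (x : Fin m → ZMod 3) : ZMod 3 :=
  if k < hammingNorm x then 1 else 0

/-- The Hamming weight of the codeword `c_{u,v}` of the code `C_h`, i.e. the number
of `x ∈ 𝔽_3^m \ {0}` with `u·h(x) + v·x ≠ 0`. -/
def cwWeight {m : ℕ} (h : (Fin m → ZMod 3) → ZMod 3)
    (u : ZMod 3) (v : Fin m → ZMod 3) : ℕ :=
  (Finset.univ.filter fun x : Fin m → ZMod 3 =>
    x ≠ 0 ∧ u * h x + ∑ j, v j * x j ≠ 0).card




def Ssum (m k : ℕ) : ℕ := ∑ j ∈ Finset.range (k+1), 2^j * m.choose j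

lemma Ssum_succ_k (m k : ℕ) : Ssum m (k+1) = Ssum m k + 2^(k+1) * m.choose (k+1) :=
  Finset.sum_range_succ _ _

lemma Ssum_zero_k (m : ℕ) : Ssum m 0 = 1 := by simp [Ssum]

lemma Ssum_zero_m (k : ℕ) : Ssum 0 k = 1 := by
  induction k with
  | zero => simp [Ssum]
  | succ k ih => rw [Ssum_succ_k, Nat.choose_eq_zero_of_lt (by omega)]; simpa using ih

lemma Ssum_rec (m k : ℕ) : Ssum (m+1) (k+1) = Ssum m (k+1) + 2 * Ssum m k := by
  unfold Ssum
  rw [Finset.sum_range_succ' (fun j => 2^j * (m+1).choose j),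
      Finset.sum_range_succ' (fun j => 2^j * m.choose j)]
  simp only [Nat.choose_succ_succ, Nat.succ_eq_add_one, Nat.choose_zero_right, mul_add,
    Finset.sum_add_distrib, pow_succ, Finset.mul_sum]
  simp only [show ∀ x:ℕ, 2*(2^x*m.choose x) = 2^x*2*m.choose x from fun x => by ring]
  omega

lemma Ssum_mono_k {m k k' : ℕ} (h : k ≤ k') : Ssum m k ≤ Ssum m k' :=
  Finset.sum_le_sum_of_subset (Finset.range_subset_range.2 (by omega))

lemma Ssum_step_m (m k : ℕ) : Ssum (m+1) k ≤ 3 * Ssum m k := by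
  cases k with
  | zero => simp [Ssum_zero_k]
  | succ k =>
    rw [Ssum_rec]
    have := Ssum_mono_k (m := m) (show k ≤ k+1 by omega)
    omega


lemma key_id (k : ℕ) :
    Ssum (2*(k+2)+1) (k+2) + 2^(k+2) * (2*(k+1)+1).choose (k+1) = 9 * Ssum (2*(k+1)+1) (k+1) := by
  set A := 2*(k+1)+1 with hA
  have hA1 : Ssum (A+1+1) (k+2) = Ssum (A+1) (k+2) + 2 * Ssum (A+1) (k+1) := Ssum_rec _ _
  have hA2 : Ssum (A+1) (k+2) = Ssum A (k+2) + 2 * Ssum A (k+1) := Ssum_rec _ _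
  have hA3 : Ssum (A+1) (k+1) = Ssum A (k+1) + 2 * Ssum A k := Ssum_rec _ _
  have h4 : Ssum A (k+2) = Ssum A (k+1) + 2^(k+2) * A.choose (k+2) := Ssum_succ_k _ _
  have h5 : Ssum A (k+1) = Ssum A k + 2^(k+1) * A.choose (k+1) := Ssum_succ_k _ _
  have h6 : A.choose (k+2) = A.choose (k+1) := by
    have h := Nat.choose_symm (n := A) (k := k+2) (by omega)
    rw [show A - (k+2) = k+1 from by omega] at h
    exact h.symm
  have e2 : 2^(k+2) * A.choose (k+1) = 2 * (2^(k+1) * A.choose (k+1)) := by ring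
  have e1 : 2*(k+2)+1 = A+1+1 := by omega
  rw [h6, e2] at h4
  rw [e1, e2]
  omega

lemma boundary_bound (k : ℕ) (hk : 2 ≤ k) : 9 * Ssum (2*k+1) k ≤ 2 * 3^(2*k+1) := by
  induction k, hk using Nat.le_induction with
  | base => norm_num [Ssum, Finset.sum_range_succ, Nat.choose]
  | succ n hn ih =>
    obtain ⟨j, rfl⟩ : ∃ j, n = j + 1 := ⟨n-1, by omega⟩
    show 9 * Ssum (2*(j+2)+1) (j+2) ≤ 2 * 3^(2*(j+2)+1)
    have hid := key_id j
    have hpow : 3^(2*(j+2)+1) = 9 * 3^(2*(j+1)+1) := by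
      rw [show 2*(j+2)+1 = (2*(j+1)+1)+2 from by omega, pow_add]; ring
    omega

lemma Nbound {m k : ℕ} (hk2 : 2 ≤ k) (hm : 2*k+1 ≤ m) : 9 * Ssum m k ≤ 2 * 3^m := by
  induction m, hm using Nat.le_induction with
  | base => exact boundary_bound k hk2
  | succ n hn ih =>
    have h1 := Ssum_step_m n k
    have hpow : (3:ℕ)^(n+1) = 3 * 3^n := by rw [pow_succ]; ring
    omega


def Ncard (m k : ℕ) : ℕ :=
  (Finset.univ.filter fun x : Fin m → ZMod 3 => hammingNorm x ≤ k).card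

lemma zmod3_sum (g : ZMod 3 → ℕ) : ∑ a : ZMod 3, g a = g 0 + g 1 + g 2 := by
  show ∑ a : Fin 3, g a = _
  exact Fin.sum_univ_three g

lemma hammingNorm_cons {m : ℕ} (a : ZMod 3) (y : Fin m → ZMod 3) :
    hammingNorm (Fin.cons a y : Fin (m+1) → ZMod 3)
      = (if a = 0 then 0 else 1) + hammingNorm y := by
  unfold hammingNorm
  rw [Finset.card_filter, Finset.card_filter, Fin.sum_univ_succ]
  simp only [Fin.cons_zero, Fin.cons_succ]
  split <;> simp_all

lemma Ncard_rec (m k : ℕ) : Ncard (m+1) (k+1) = Ncard m (k+1) + 2 * Ncard m k := by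
  unfold Ncard
  rw [Finset.card_filter, Finset.card_filter, Finset.card_filter]
  rw [← (Fin.consEquiv (fun _ : Fin (m+1) => ZMod 3)).sum_comp
      (fun x => if hammingNorm x ≤ k+1 then 1 else 0)]
  rw [Fintype.sum_prod_type]
  rw [zmod3_sum (fun a => ∑ y : Fin m → ZMod 3,
      if hammingNorm (Fin.consEquiv (fun _ : Fin (m+1) => ZMod 3) (a, y)) ≤ k+1 then 1 else 0)]
  simp only [Fin.consEquiv, Equiv.coe_fn_mk, hammingNorm_cons]
  norm_num [if_neg (show ¬((2:ZMod 3) = 0) by decide),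
    show ∀ t:ℕ, (1 + t ≤ k+1) ↔ (t ≤ k) from fun t => by omega]
  omega

lemma Ncard_zero_m (k : ℕ) : Ncard 0 k = 1 := by
  unfold Ncard
  rw [Finset.filter_true_of_mem (fun x _ => by
    simp [hammingNorm])]
  simp

lemma Ncard_zero_k (m : ℕ) : Ncard m 0 = 1 := by
  unfold Ncard
  have : ∀ x : Fin m → ZMod 3, (hammingNorm x ≤ 0) ↔ x = 0 := by
    intro x; rw [Nat.le_zero, hammingNorm_eq_zero]
  rw [Finset.filter_congr (fun x _ => this x), Finset.filter_eq']
  simp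

lemma Ncard_eq_Ssum (m k : ℕ) : Ncard m k = Ssum m k := by
  induction m generalizing k with
  | zero => rw [Ncard_zero_m, Ssum_zero_m]
  | succ m ih =>
    cases k with
    | zero => rw [Ncard_zero_k, Ssum_zero_k]
    | succ k => rw [Ncard_rec, Ssum_rec, ih, ih]



lemma fiber_card {m : ℕ} (v : Fin m → ZMod 3) (hv : v ≠ 0) (c : ZMod 3) :
    3 * (Finset.univ.filter fun x : Fin m → ZMod 3 => (∑ j, v j * x j) = c).card = 3^m := by
  obtain ⟨i, hi⟩ : ∃ i, v i ≠ 0 := Function.ne_iff.mp hv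
  have key : ∀ c₁ c₂ : ZMod 3,
      (Finset.univ.filter fun x : Fin m → ZMod 3 => (∑ j, v j * x j) = c₁).card
        = (Finset.univ.filter fun x : Fin m → ZMod 3 => (∑ j, v j * x j) = c₂).card := by
    intro c₁ c₂
    have lsum : ∀ (d : ZMod 3) (x : Fin m → ZMod 3),
        (∑ j, v j * (x j + if j = i then d * (v i)⁻¹ else 0)) = (∑ j, v j * x j) + d := by
      intro d x
      simp only [mul_add, Finset.sum_add_distrib]
      congr 1
      rw [Finset.sum_eq_single i]
      · rw [if_pos rfl, ← mul_assoc, mul_comm (v i), mul_assoc, mul_inv_cancel₀ hi, mul_one]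
      · intro j _ hj; rw [if_neg hj, mul_zero]
      · intro h; exact absurd (Finset.mem_univ i) h
    apply Finset.card_bij' (fun x _ => fun j => x j + if j = i then (c₂ - c₁) * (v i)⁻¹ else 0)
      (fun y _ => fun j => y j + if j = i then (c₁ - c₂) * (v i)⁻¹ else 0)
    · intro x hx
      simp only [Finset.mem_filter, Finset.mem_univ, true_and] at hx ⊢
      rw [lsum, hx]; ring
    · intro y hy
      simp only [Finset.mem_filter, Finset.mem_univ, true_and] at hy ⊢
      rw [lsum, hy]; ring
    · intro x hx; funext j; by_cases h : j = i <;> simp [h]; ring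
    · intro y hy; funext j; by_cases h : j = i <;> simp [h]; ring
  have hpart : (Finset.univ : Finset (Fin m → ZMod 3)).card
      = ∑ b : ZMod 3, (Finset.univ.filter fun x : Fin m → ZMod 3 => (∑ j, v j * x j) = b).card :=
    Finset.card_eq_sum_card_fiberwise (fun x _ => Finset.mem_univ _)
  rw [Finset.card_univ] at hpart
  have hcard : Fintype.card (Fin m → ZMod 3) = 3^m := by simp
  rw [hcard] at hpart
  rw [zmod3_sum] at hpart
  have e0 := key 0 c
  have e1 := key 1 c
  have e2 := key 2 c
  rw [e0, e1, e2] at hpart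
  linarith

lemma hammingNorm_neg {m : ℕ} (x : Fin m → ZMod 3) : hammingNorm (-x) = hammingNorm x := by
  unfold hammingNorm
  congr 1
  apply Finset.filter_congr
  intro i _
  simp

lemma ball_fiber_neg {m k : ℕ} (v : Fin m → ZMod 3) (c : ZMod 3) :
    (Finset.univ.filter fun x : Fin m → ZMod 3 =>
        hammingNorm x ≤ k ∧ (∑ j, v j * x j) = c).card
      = (Finset.univ.filter fun x : Fin m → ZMod 3 =>
        hammingNorm x ≤ k ∧ (∑ j, v j * x j) = -c).card := by
  apply Finset.card_bij' (fun x _ => -x) (fun y _ => -y) <;> intro x hx <;>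
    simp only [Finset.mem_filter, Finset.mem_univ, true_and, neg_neg] at hx ⊢ <;>
    simp [hammingNorm_neg, mul_neg, Finset.sum_neg_distrib, hx.1, hx.2]

lemma card_split {α : Type*} [Fintype α] (p q : α → Prop) [DecidablePred p] [DecidablePred q] :
    (Finset.univ.filter p).card
      = (Finset.univ.filter fun x => p x ∧ q x).card
        + (Finset.univ.filter fun x => p x ∧ ¬ q x).card := by
  have h := Finset.card_filter_add_card_filter_not
    (s := Finset.univ.filter p) (p := q)
  rw [Finset.filter_filter, Finset.filter_filter] at h
  omega

lemma ball_partition {m k : ℕ} (v : Fin m → ZMod 3) :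
    (Finset.univ.filter fun x : Fin m → ZMod 3 => hammingNorm x ≤ k).card
      = (Finset.univ.filter fun x : Fin m → ZMod 3 =>
          hammingNorm x ≤ k ∧ (∑ j, v j * x j) = 0).card
        + (Finset.univ.filter fun x : Fin m → ZMod 3 =>
          hammingNorm x ≤ k ∧ (∑ j, v j * x j) = 1).card
        + (Finset.univ.filter fun x : Fin m → ZMod 3 =>
          hammingNorm x ≤ k ∧ (∑ j, v j * x j) = 2).card := by
  have hpart : (Finset.univ.filter fun x : Fin m → ZMod 3 => hammingNorm x ≤ k).card
      = ∑ b : ZMod 3, ((Finset.univ.filter fun x : Fin m → ZMod 3 => hammingNorm x ≤ k).filter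
          fun x => (∑ j, v j * x j) = b).card :=
    Finset.card_eq_sum_card_fiberwise (fun x _ => Finset.mem_univ _)
  simp only [Finset.filter_filter] at hpart
  rw [zmod3_sum] at hpart
  exact hpart


lemma gbar_eq_zero {m k : ℕ} (x : Fin m → ZMod 3) :
    gbar k x = 0 ↔ hammingNorm x ≤ k := by
  unfold gbar
  split <;> simp_all <;> omega

lemma gbar_eq_one {m k : ℕ} (x : Fin m → ZMod 3) (h : ¬ hammingNorm x ≤ k) :
    gbar k x = 1 := by
  unfold gbar; rw [if_pos (by omega)]

lemma filter_and_comm {α : Type*} [Fintype α] (p q : α → Prop)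
    [DecidablePred p] [DecidablePred q] :
    (Finset.univ.filter fun x => p x ∧ q x) = (Finset.univ.filter fun x => q x ∧ p x) :=
  Finset.filter_congr (fun x _ => and_comm)

lemma cwWeight_eq {m : ℕ} (h : (Fin m → ZMod 3) → ZMod 3) (u : ZMod 3) (v : Fin m → ZMod 3)
    (h0 : h 0 = 0) :
    cwWeight h u v
      + (Finset.univ.filter fun x : Fin m → ZMod 3 => u * h x + ∑ j, v j * x j = 0).card
      = 3^m := by
  unfold cwWeight
  have key := Finset.card_filter_add_card_filter_not
    (s := (Finset.univ : Finset (Fin m → ZMod 3)))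
    (p := fun x => x ≠ 0 ∧ u * h x + ∑ j, v j * x j ≠ 0)
  rw [Finset.card_univ] at key
  have hcard : Fintype.card (Fin m → ZMod 3) = 3^m := by simp
  rw [hcard] at key
  have heq : (Finset.univ.filter fun x : Fin m → ZMod 3 =>
      ¬(x ≠ 0 ∧ u * h x + ∑ j, v j * x j ≠ 0))
      = (Finset.univ.filter fun x : Fin m → ZMod 3 => u * h x + ∑ j, v j * x j = 0) := by
    apply Finset.filter_congr
    intro x _
    constructor
    · intro hx
      rcases not_and_or.mp hx with h1 | h1
      · push_neg at h1
        subst h1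
        simp [h0]
      · push_neg at h1; exact h1
    · intro hx
      exact fun hc => hc.2 hx
  rw [heq] at key
  exact key

lemma Zcard_ge {m k : ℕ} (hk2 : 2 ≤ k) (hm : 2*k+1 ≤ m) (u : ZMod 3) (v : Fin m → ZMod 3) :
    Ssum m k ≤ (Finset.univ.filter fun x : Fin m → ZMod 3 =>
      u * gbar k x + ∑ j, v j * x j = 0).card := by
  have hN : 9 * Ssum m k ≤ 2 * 3^m := Nbound hk2 hm
  have hcard : Fintype.card (Fin m → ZMod 3) = 3^m := by simp
  by_cases hu : u = 0
  · subst hu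
    by_cases hv : v = 0
    · have heq : (Finset.univ.filter fun x : Fin m → ZMod 3 =>
          0 * gbar k x + ∑ j, v j * x j = 0) = Finset.univ := by
        subst hv
        apply Finset.filter_true_of_mem
        intro x _; simp
      rw [heq, Finset.card_univ, hcard]
      linarith
    · have heq : (Finset.univ.filter fun x : Fin m → ZMod 3 =>
          0 * gbar k x + ∑ j, v j * x j = 0)
          = (Finset.univ.filter fun x : Fin m → ZMod 3 => (∑ j, v j * x j) = 0) := by
        apply Finset.filter_congr; intro x _; simp
      rw [heq]
      have hfib := fiber_card v hv 0
      linarith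
  · by_cases hv : v = 0
    · have heq : (Finset.univ.filter fun x : Fin m → ZMod 3 =>
          u * gbar k x + ∑ j, v j * x j = 0)
          = (Finset.univ.filter fun x : Fin m → ZMod 3 => hammingNorm x ≤ k) := by
        apply Finset.filter_congr; intro x _
        subst hv
        simp only [Pi.zero_apply, zero_mul, Finset.sum_const_zero, add_zero]
        rw [mul_eq_zero]
        constructor
        · rintro (h1 | h1)
          · exact absurd h1 hu
          · exact (gbar_eq_zero x).mp h1
        · intro h1; exact Or.inr ((gbar_eq_zero x).mpr h1)
      rw [heq]
      exact le_of_eq (Ncard_eq_Ssum m k).symm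
    · -- main case : u ≠ 0, v ≠ 0
      have hmu : -u = 1 ∨ -u = 2 := by revert hu; revert u; decide
      have hball := ball_partition (k := k) v
      have hS : (Finset.univ.filter fun x : Fin m → ZMod 3 => hammingNorm x ≤ k).card
          = Ssum m k := Ncard_eq_Ssum m k
      have hsym : (Finset.univ.filter fun x : Fin m → ZMod 3 =>
            hammingNorm x ≤ k ∧ (∑ j, v j * x j) = 1).card
          = (Finset.univ.filter fun x : Fin m → ZMod 3 =>
            hammingNorm x ≤ k ∧ (∑ j, v j * x j) = 2).card := by
        have h := ball_fiber_neg (k := k) v 1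
        rw [show (-1 : ZMod 3) = 2 by decide] at h
        exact h
      have hfib := fiber_card v hv (-u)
      have hfibsplit := card_split (p := fun x : Fin m → ZMod 3 => (∑ j, v j * x j) = -u)
        (q := fun x : Fin m → ZMod 3 => hammingNorm x ≤ k)
      rw [filter_and_comm (fun x : Fin m → ZMod 3 => (∑ j, v j * x j) = -u)
        (fun x : Fin m → ZMod 3 => hammingNorm x ≤ k)] at hfibsplit
      have hZsplit := card_split
        (p := fun x : Fin m → ZMod 3 => u * gbar k x + ∑ j, v j * x j = 0)
        (q := fun x : Fin m → ZMod 3 => hammingNorm x ≤ k)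
      have hZ1 : (Finset.univ.filter fun x : Fin m → ZMod 3 =>
            (u * gbar k x + ∑ j, v j * x j = 0) ∧ hammingNorm x ≤ k)
          = (Finset.univ.filter fun x : Fin m → ZMod 3 =>
            hammingNorm x ≤ k ∧ (∑ j, v j * x j) = 0) := by
        apply Finset.filter_congr; intro x _
        constructor
        · rintro ⟨h1, h2⟩
          refine ⟨h2, ?_⟩
          rwa [(gbar_eq_zero x).mpr h2, mul_zero, zero_add] at h1
        · rintro ⟨h2, h1⟩
          refine ⟨?_, h2⟩
          rw [(gbar_eq_zero x).mpr h2, mul_zero, zero_add]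
          exact h1
      have hZ2 : (Finset.univ.filter fun x : Fin m → ZMod 3 =>
            (u * gbar k x + ∑ j, v j * x j = 0) ∧ ¬ hammingNorm x ≤ k)
          = (Finset.univ.filter fun x : Fin m → ZMod 3 =>
            (∑ j, v j * x j) = -u ∧ ¬ hammingNorm x ≤ k) := by
        apply Finset.filter_congr; intro x _
        constructor
        · rintro ⟨h1, h2⟩
          rw [gbar_eq_one x h2, mul_one] at h1
          exact ⟨eq_neg_of_add_eq_zero_right h1, h2⟩
        · rintro ⟨h1, h2⟩
          refine ⟨?_, h2⟩
          rw [gbar_eq_one x h2, mul_one, h1]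
          ring
      rw [hZsplit, hZ1, hZ2]
      rcases hmu with h | h <;> rw [h] at hfib hfibsplit ⊢ <;> rw [hS] at hball <;> linarith

/-- For `m ≥ 5` and `2 ≤ k ≤ ⌊(m-1)/2⌋`, every codeword of
`C_{ḡ_{(m,k)}}` has Hamming weight at most `3^m - Σ_{j=0}^{k} 2^j·C(m,j)`, and this
weight is attained by the codeword `c_{1,0}`: the maximum Hamming weight of
`C_{ḡ_{(m,k)}}` equals `3^m - Σ_{j=0}^{k} 2^j·C(m,j)`. -/
theorem stmt_17 (m k : ℕ) (hm : 5 ≤ m) (hk2 : 2 ≤ k) (hk : k ≤ (m - 1) / 2) :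
    (∀ (u : ZMod 3) (v : Fin m → ZMod 3),
      (cwWeight (gbar (m := m) k) u v : ℤ)
        ≤ (3 : ℤ) ^ m - ∑ j ∈ Finset.range (k + 1), 2 ^ j * (m.choose j : ℤ))
    ∧ (cwWeight (gbar (m := m) k) 1 0 : ℤ)
        = (3 : ℤ) ^ m - ∑ j ∈ Finset.range (k + 1), 2 ^ j * (m.choose j : ℤ) := by
  have hm2 : 2*k+1 ≤ m := by omega
  have hg0 : gbar (m := m) k 0 = 0 := by
    unfold gbar
    rw [if_neg]
    rw [hammingNorm_zero]
    omega
  have hcast : ((Ssum m k : ℕ) : ℤ) = ∑ j ∈ Finset.range (k + 1), 2 ^ j * (m.choose j : ℤ) := by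
    unfold Ssum
    push_cast
    rfl
  have h3 : (3 : ℤ)^m = ((3^m : ℕ) : ℤ) := by push_cast; rfl
  constructor
  · intro u v
    have hw := cwWeight_eq (gbar (m := m) k) u v hg0
    have hZ := Zcard_ge hk2 hm2 u v
    have hkey : cwWeight (gbar (m := m) k) u v + Ssum m k ≤ 3^m := by linarith
    clear hw hZ
    rw [h3, ← hcast]
    omega
  · have hw := cwWeight_eq (gbar (m := m) k) 1 0 hg0
    have heq : (Finset.univ.filter fun x : Fin m → ZMod 3 =>
        1 * gbar k x + ∑ j, (0 : Fin m → ZMod 3) j * x j = 0).card = Ssum m k := by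
      rw [show (Finset.univ.filter fun x : Fin m → ZMod 3 =>
          1 * gbar k x + ∑ j, (0 : Fin m → ZMod 3) j * x j = 0)
          = (Finset.univ.filter fun x : Fin m → ZMod 3 => hammingNorm x ≤ k) from
        Finset.filter_congr fun x _ => by
          simp only [Pi.zero_apply, zero_mul, Finset.sum_const_zero, add_zero, one_mul]
          exact gbar_eq_zero x]
      exact Ncard_eq_Ssum m k
    rw [heq] at hw
    clear heq
    rw [h3, ← hcast]
    omega
end

section
/- Let m, k be integers with m ≥ 5 and 2 ≤ k ≤ ⌊(m-1)/2⌋. Then for every integer i with 1 ≤ i ≤ m, 3^{m-1} + Ψ_k(i, m) - Σ_{j=0}^{k} 2^j·C(m, j) > 0. -/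
open Finset

/-- The ternary Krawtchouk polynomial
`K_t(i,m) = Σ_{j=0}^{t} (-1)^j·2^{t-j}·C(i,j)·C(m-i,t-j)`. -/
def kraw (t i m : ℕ) : ℤ :=
  ∑ j ∈ Finset.range (t + 1),
    (-1 : ℤ) ^ j * 2 ^ (t - j) * (i.choose j : ℤ) * ((m - i).choose (t - j) : ℤ)

/-- The Lloyd polynomial `Ψ_k(i,m) = Σ_{t=0}^{k} K_t(i,m)`. -/
def lloyd (k i m : ℕ) : ℤ := ∑ t ∈ Finset.range (k + 1), kraw t i m

/-- Auxiliary: `S(m,k) = Σ_{j=0}^{k} 2^j·C(m,j)`. -/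
def Sfun (m k : ℕ) : ℕ := ∑ j ∈ Finset.range (k + 1), 2 ^ j * m.choose j

lemma vander (i m t : ℕ) (him : i ≤ m) :
    ∑ j ∈ Finset.range (t + 1), i.choose j * (m - i).choose (t - j) = m.choose t := by
  have h := Nat.add_choose_eq i (m - i) t
  rw [Nat.add_sub_cancel' him] at h
  rw [h, Finset.Nat.sum_antidiagonal_eq_sum_range_succ_mk]

lemma kraw_abs (t i m : ℕ) (him : i ≤ m) :
    |kraw t i m| ≤ 2 ^ t * (m.choose t : ℤ) := by
  calc |kraw t i m| ≤ ∑ j ∈ Finset.range (t + 1),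
        |(-1 : ℤ) ^ j * 2 ^ (t - j) * (i.choose j : ℤ) * ((m - i).choose (t - j) : ℤ)| :=
      Finset.abs_sum_le_sum_abs _ _
    _ ≤ ∑ j ∈ Finset.range (t + 1),
        2 ^ t * ((i.choose j : ℤ) * ((m - i).choose (t - j) : ℤ)) := by
      apply Finset.sum_le_sum
      intro j _
      have h1 : |(-1 : ℤ) ^ j * 2 ^ (t - j) * (i.choose j : ℤ) * ((m - i).choose (t - j) : ℤ)|
          = 2 ^ (t - j) * ((i.choose j : ℤ) * ((m - i).choose (t - j) : ℤ)) := by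
        rw [abs_mul, abs_mul, abs_mul, abs_pow, abs_neg, abs_one, one_pow, one_mul,
          Nat.abs_cast, Nat.abs_cast, abs_pow, abs_two, mul_assoc]
      rw [h1]
      have h2 : (2 : ℤ) ^ (t - j) ≤ 2 ^ t := pow_le_pow_right₀ (by norm_num) (Nat.sub_le t j)
      have h3 : (0 : ℤ) ≤ (i.choose j : ℤ) * ((m - i).choose (t - j) : ℤ) := by positivity
      exact mul_le_mul_of_nonneg_right h2 h3
    _ = 2 ^ t * (m.choose t : ℤ) := by
      rw [← Finset.mul_sum]
      congr 1
      rw [← vander i m t him]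
      push_cast
      rfl

lemma lloyd_abs (k i m : ℕ) (him : i ≤ m) : |lloyd k i m| ≤ (Sfun m k : ℤ) := by
  calc |lloyd k i m| ≤ ∑ t ∈ Finset.range (k + 1), |kraw t i m| :=
      Finset.abs_sum_le_sum_abs _ _
    _ ≤ ∑ t ∈ Finset.range (k + 1), 2 ^ t * (m.choose t : ℤ) :=
      Finset.sum_le_sum fun t _ => kraw_abs t i m him
    _ = (Sfun m k : ℤ) := by rw [Sfun]; push_cast; rfl

lemma Sstep (m k : ℕ) (hkm : 2 * k + 1 ≤ m) : Sfun (m + 1) k ≤ 2 * Sfun m k := by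
  rw [Sfun, Sfun, Finset.mul_sum]
  apply Finset.sum_le_sum
  intro j hj
  have hjk : j ≤ k := by simpa [Nat.lt_succ_iff] using hj
  match j with
  | 0 => simp
  | s + 1 =>
    have h1 : (m + 1).choose (s + 1) = m.choose s + m.choose (s + 1) :=
      Nat.choose_succ_succ m s
    have h2 : m.choose s ≤ m.choose (s + 1) :=
      Nat.choose_le_succ_of_lt_half_left (by omega)
    calc 2 ^ (s + 1) * (m + 1).choose (s + 1)
        = 2 ^ (s + 1) * (m.choose s + m.choose (s + 1)) := by rw [h1]
      _ ≤ 2 ^ (s + 1) * (2 * m.choose (s + 1)) := by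
          apply Nat.mul_le_mul_left; omega
      _ = 2 * (2 ^ (s + 1) * m.choose (s + 1)) := by ring

lemma step_ind (k m : ℕ) (hkm : 2 * k + 1 ≤ m) (h : 2 * Sfun m k < 3 ^ (m - 1)) :
    2 * Sfun (m + 1) k < 3 ^ m := by
  have h1 := Sstep m k hkm
  have h3 : 3 ^ m = 3 * 3 ^ (m - 1) := by
    rw [← pow_succ']
    congr 1
    omega
  omega

lemma up (k m0 : ℕ) (hbase : 2 * k + 1 ≤ m0) (h0 : 2 * Sfun m0 k < 3 ^ (m0 - 1)) :
    ∀ m, m0 ≤ m → 2 * Sfun m k < 3 ^ (m - 1) := by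
  intro m hm
  induction m, hm using Nat.le_induction with
  | base => exact h0
  | succ n hn ih =>
    have h1 : 2 * k + 1 ≤ n := le_trans hbase hn
    have h2 := step_ind k n h1 ih
    simpa using h2

lemma pow89 : ∀ k, 6 ≤ k → 2 * 8 ^ k < 9 ^ k := by
  intro k hk
  induction k, hk using Nat.le_induction with
  | base => norm_num
  | succ n hn ih =>
    have h8 : 2 * 8 ^ (n + 1) = 8 * (2 * 8 ^ n) := by ring
    have h9 : 9 ^ (n + 1) = 9 * 9 ^ n := by ring
    have h0 : 0 < 9 ^ n := by positivity
    omega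

lemma main_ineq (m k : ℕ) (hk2 : 2 ≤ k) (hkm : 2 * k + 1 ≤ m)
    (h52 : ¬(m = 5 ∧ k = 2)) (h73 : ¬(m = 7 ∧ k = 3)) :
    2 * Sfun m k < 3 ^ (m - 1) := by
  rcases Nat.lt_or_ge k 6 with h6 | h6
  · interval_cases k
    · exact up 2 6 (by norm_num) (by decide) m (by omega)
    · exact up 3 8 (by norm_num) (by decide) m (by omega)
    · exact up 4 9 (by norm_num) (by decide) m (by omega)
    · exact up 5 11 (by norm_num) (by decide) m (by omega)
  · have h1 : Sfun (2 * k + 1) k ≤ 2 ^ k * 4 ^ k := by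
      rw [Sfun]
      calc ∑ j ∈ Finset.range (k + 1), 2 ^ j * (2 * k + 1).choose j
          ≤ ∑ j ∈ Finset.range (k + 1), 2 ^ k * (2 * k + 1).choose j := by
            apply Finset.sum_le_sum
            intro j hj
            exact Nat.mul_le_mul
              (Nat.pow_le_pow_right (by norm_num) (by simpa [Nat.lt_succ_iff] using hj)) le_rfl
        _ = 2 ^ k * 4 ^ k := by rw [← Finset.mul_sum, Nat.sum_range_choose_halfway]
    have h2 := pow89 k h6
    have h3 : 2 ^ k * 4 ^ k = 8 ^ k := by rw [← Nat.mul_pow]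
    have h4 : (3 : ℕ) ^ (2 * k + 1 - 1) = 9 ^ k := by
      rw [show 2 * k + 1 - 1 = 2 * k from rfl, pow_mul]
      norm_num
    have hb : 2 * Sfun (2 * k + 1) k < 3 ^ (2 * k + 1 - 1) := by omega
    exact up k (2 * k + 1) le_rfl hb m hkm

/-- For `m ≥ 5`, `2 ≤ k ≤ ⌊(m-1)/2⌋` and every `1 ≤ i ≤ m`,
`3^{m-1} + Ψ_k(i,m) - Σ_{j=0}^{k} 2^j·C(m,j) > 0`. -/
theorem stmt_19 (m k : ℕ) (hm : 5 ≤ m) (hk2 : 2 ≤ k) (hk : k ≤ (m - 1) / 2)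
    (i : ℕ) (hi1 : 1 ≤ i) (him : i ≤ m) :
    0 < (3 : ℤ) ^ (m - 1) + lloyd k i m
        - ∑ j ∈ Finset.range (k + 1), 2 ^ j * (m.choose j : ℤ) := by
  have hkm : 2 * k + 1 ≤ m := by omega
  by_cases hs : (m = 5 ∧ k = 2) ∨ (m = 7 ∧ k = 3)
  · rcases hs with ⟨rfl, rfl⟩ | ⟨rfl, rfl⟩
    · interval_cases i <;> decide
    · interval_cases i <;> decide
  · rw [not_or] at hs
    have h := main_ineq m k hk2 hkm hs.1 hs.2
    have h2 := lloyd_abs k i m him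
    have h3 : (∑ j ∈ Finset.range (k + 1), 2 ^ j * (m.choose j : ℤ)) = (Sfun m k : ℤ) := by
      rw [Sfun]; push_cast; rfl
    rw [h3]
    have h4 := abs_le.mp h2
    have hc : (2 * Sfun m k : ℤ) < 3 ^ (m - 1) := by exact_mod_cast h
    push_cast at hc
    linarith [h4.1]
end
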